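/- Let b ≥ 2, ℓ ≥ 1, m = b^{ℓ+1}, G = {n ∈ [0,m) : ⌊n/b^ℓ⌋ = n mod b}, and let p > m with gcd(p,b)=1. Then C(b^ℓ mod p) = -1 + Σ_{n ∈ G} (⌊(n+1)p/m⌋ - ⌊n·p/m⌋), where C(g) = #{r ∈ {1,...,p-1} : ⌊b·r/p⌋ = ⌊b·(g·r mod p)/p⌋}. -/

import Mathlib

theorem collision_good_slice_formula (b ℓ p : ℕ) (hb : 2 ≤ b) (hℓ : 1 ≤ ℓ)
    (hp : b ^ (ℓ + 1) < p) (hcop : Nat.gcd p b = 1) :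
    ((((Finset.Icc 1 (p - 1)).filter
        (fun r => b * r / p = b * (b ^ ℓ % p * r % p) / p)).card : ℤ)) =
    -1 + ∑ n ∈ (Finset.range (b ^ (ℓ + 1))).filter (fun n => n / b ^ ℓ = n % b),
      (((n + 1) * p / b ^ (ℓ + 1) : ℕ) - (n * p / b ^ (ℓ + 1) : ℕ) : ℤ) := by
  set m := b ^ (ℓ + 1) with hm
  have hb0 : 0 < b := by omega
  have hX : 0 < b ^ ℓ := pow_pos hb0 ℓ
  have hm0 : 0 < m := pow_pos hb0 _
  have hp0 : 0 < p := lt_trans hm0 hp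
  have hmb : m = b * (b ^ ℓ) := by rw [hm, pow_succ, mul_comm]
  have hmX : m = b ^ ℓ * b := by rw [hm, pow_succ]
  have hbm : b ≤ m := by
    calc b = b * 1 := (mul_one b).symm
    _ ≤ b * b ^ ℓ := Nat.mul_le_mul_left b hX
    _ = m := hmb.symm
  have hcopm : Nat.Coprime m p := (Nat.Coprime.pow_right (ℓ + 1) hcop).symm
  -- m does not divide p*K for 1 ≤ K < m
  have hndvd : ∀ K, 1 ≤ K → K < m → ¬ m ∣ p * K := by
    intro K h1 h2 hdvd
    have : m ∣ K := hcopm.dvd_of_dvd_mul_left hdvd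
    have := Nat.le_of_dvd (by omega) this
    omega
  -- key division fact
  have hD : ∀ K, 1 ≤ K → K < m → (p * K - 1) / m = p * K / m := by
    intro K h1 h2
    have hpk : 1 ≤ p * K := Nat.one_le_iff_ne_zero.mpr (by positivity)
    have h := Nat.succ_div (a := p * K - 1) (b := m)
    rw [Nat.sub_add_cancel hpk] at h
    rw [h, if_neg (hndvd K h1 h2), add_zero]
  have hE : (p * m - 1) / m = p - 1 := by
    have e1 : m * (p - 1) + m = m * p := by
      rw [← Nat.mul_succ]; congr 1; omega
    have e2 : p * m = m * p := mul_comm p m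
    have hmp : 1 ≤ m * p := Nat.one_le_iff_ne_zero.mpr (by positivity)
    have e3 : p * m - 1 = m * (p - 1) + (m - 1) := by omega
    rw [e3, Nat.mul_add_div hm0, Nat.div_eq_of_lt (by omega), add_zero]
  -- first digit lemma
  have hA : ∀ r : ℕ, b * r / p = (m * r / p) / b ^ ℓ := by
    intro r
    have h1 : m * r = b ^ ℓ * (b * r) := by rw [hmb]; ring
    rw [Nat.div_div_eq_div_mul, h1, mul_comm p (b ^ ℓ), Nat.mul_div_mul_left _ _ hX]
  -- last digit lemma
  have hB : ∀ r : ℕ, r < p → b * (b ^ ℓ % p * r % p) / p = (m * r / p) % b := by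
    intro r hr
    have h1 : b ^ ℓ % p * r % p = b ^ ℓ * r % p := Nat.mod_mul_mod _ _ _
    have hq := Nat.div_add_mod (b ^ ℓ * r) p
    have h2 : m * r = p * (b * (b ^ ℓ * r / p)) + b * (b ^ ℓ * r % p) := by
      calc m * r = b * (b ^ ℓ * r) := by rw [hmb]; ring
      _ = b * (p * (b ^ ℓ * r / p) + b ^ ℓ * r % p) := by rw [hq]
      _ = p * (b * (b ^ ℓ * r / p)) + b * (b ^ ℓ * r % p) := by ring
    have hs : b ^ ℓ * r % p < p := Nat.mod_lt _ hp0
    have hlt : b * (b ^ ℓ * r % p) / p < b :=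
      (Nat.div_lt_iff_lt_mul hp0).mpr (by
        exact (Nat.mul_lt_mul_left hb0).mpr hs)
    rw [h1, h2, Nat.mul_add_div hp0, Nat.mul_add_mod]
    exact (Nat.mod_eq_of_lt hlt).symm
  -- fiber description
  have hfiber : ∀ n, n < m →
      (Finset.Icc 1 (p - 1)).filter (fun r => m * r / p = n) =
      Finset.Icc ((p * n - 1) / m + 1) ((p * (n + 1) - 1) / m) := by
    intro n hn
    ext r
    simp only [Finset.mem_filter, Finset.mem_Icc]
    have hcm : m * r = r * m := mul_comm m r
    have hcm2 : m * p = p * m := mul_comm m p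
    have c1 : n * p = p * n := mul_comm n p
    have c2 : (n + 1) * p = p * (n + 1) := mul_comm _ p
    have hnp1 : p * (n + 1) ≤ p * m := Nat.mul_le_mul_left p (by omega)
    constructor
    · rintro ⟨⟨h1, h2⟩, h3⟩
      have hle : p * n ≤ m * r := by
        calc p * n = (m * r / p) * p := by rw [h3, mul_comm]
        _ ≤ m * r := Nat.div_mul_le_self _ _
      have hlt : m * r < (n + 1) * p :=
        (Nat.div_lt_iff_lt_mul hp0).mp (by omega)
      have hlt' : m * r < p * (n + 1) := by rw [mul_comm p (n + 1)]; exact hlt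
      have hrm1 : 1 ≤ m * r := Nat.one_le_iff_ne_zero.mpr (by positivity)
      constructor
      · have : (p * n - 1) / m < r := (Nat.div_lt_iff_lt_mul hm0).mpr (by omega)
        omega
      · exact (Nat.le_div_iff_mul_le hm0).mpr (by omega)
    · rintro ⟨hL, hU⟩
      have hL' : p * n - 1 < r * m := (Nat.div_lt_iff_lt_mul hm0).mp (by omega)
      have hU' : r * m ≤ p * (n + 1) - 1 := (Nat.le_div_iff_mul_le hm0).mp hU
      have hpn1 : 1 ≤ p * (n + 1) := Nat.one_le_iff_ne_zero.mpr (by positivity)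
      have hr1 : 1 ≤ r := by
        rcases Nat.eq_zero_or_pos r with h | h
        · subst h; simp only [zero_mul] at hL'; omega
        · exact h
      have hrp : r < p := by
        have : r * m < p * m := by omega
        exact Nat.lt_of_mul_lt_mul_right this
      have hdiv : m * r / p = n :=
        Nat.div_eq_of_lt_le (by omega) (by
          have : m * r < p * (n + 1) := by omega
          omega)
      exact ⟨⟨hr1, by omega⟩, hdiv⟩
  -- fiber cardinality
  have hcard : ∀ n, n < m → (((Finset.Icc 1 (p - 1)).filter
      (fun r => m * r / p = n)).card : ℤ) =
      (((p * (n + 1) - 1) / m : ℕ) : ℤ) - (((p * n - 1) / m : ℕ) : ℤ) := by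
    intro n hn
    rw [hfiber n hn, Nat.card_Icc]
    have h1 : p * n ≤ p * (n + 1) := Nat.mul_le_mul_left p (by omega)
    have hmono : (p * n - 1) / m ≤ (p * (n + 1) - 1) / m :=
      Nat.div_le_div_right (by omega)
    omega
  -- rewrite the collision condition
  have hScond : (Finset.Icc 1 (p - 1)).filter
      (fun r => b * r / p = b * (b ^ ℓ % p * r % p) / p)
      = (Finset.Icc 1 (p - 1)).filter
        (fun r => (m * r / p) / b ^ ℓ = (m * r / p) % b) := by
    apply Finset.filter_congr
    intro r hr
    simp only [Finset.mem_Icc] at hr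
    rw [hA r, hB r (by omega)]
  rw [hScond]
  have hmap : ∀ r ∈ (Finset.Icc 1 (p - 1)).filter
      (fun r => (m * r / p) / b ^ ℓ = (m * r / p) % b),
      m * r / p ∈ (Finset.range m).filter (fun n => n / b ^ ℓ = n % b) := by
    intro r hr
    simp only [Finset.mem_filter, Finset.mem_Icc, Finset.mem_range] at hr ⊢
    refine ⟨?_, hr.2⟩
    have hrp : r < p := by omega
    exact (Nat.div_lt_iff_lt_mul hp0).mpr ((Nat.mul_lt_mul_left hm0).mpr hrp)
  rw [Finset.card_eq_sum_card_fiberwise hmap]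
  have hfib2 : ∀ n ∈ (Finset.range m).filter (fun n => n / b ^ ℓ = n % b),
      ((((Finset.Icc 1 (p - 1)).filter
        (fun r => (m * r / p) / b ^ ℓ = (m * r / p) % b)).filter
          (fun r => m * r / p = n)).card : ℤ)
      = (((p * (n + 1) - 1) / m : ℕ) : ℤ) - (((p * n - 1) / m : ℕ) : ℤ) := by
    intro n hn
    simp only [Finset.mem_filter, Finset.mem_range] at hn
    rw [Finset.filter_filter]
    have : (Finset.Icc 1 (p - 1)).filter
        (fun r => ((m * r / p) / b ^ ℓ = (m * r / p) % b) ∧ m * r / p = n)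
        = (Finset.Icc 1 (p - 1)).filter (fun r => m * r / p = n) := by
      apply Finset.filter_congr
      intro r _
      constructor
      · exact fun h => h.2
      · intro h; exact ⟨by rw [h]; exact hn.2, h⟩
    rw [this]
    exact hcard n hn.1
  rw [Nat.cast_sum]
  rw [Finset.sum_congr rfl hfib2]
  -- per-term comparison
  have hterm : ∀ n ∈ (Finset.range m).filter (fun n => n / b ^ ℓ = n % b),
      (((p * (n + 1) - 1) / m : ℕ) : ℤ) - (((p * n - 1) / m : ℕ) : ℤ)
      = ((((n + 1) * p / m : ℕ) : ℤ) - ((n * p / m : ℕ) : ℤ))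
        - (if n = m - 1 then (1 : ℤ) else 0) := by
    intro n hn
    simp only [Finset.mem_filter, Finset.mem_range] at hn
    have hnm : n < m := hn.1
    have hfn : (((p * n - 1) / m : ℕ) : ℤ) = ((n * p / m : ℕ) : ℤ) := by
      rcases Nat.eq_zero_or_pos n with h | h
      · subst h; simp
      · rw [hD n h hnm, mul_comm]
    by_cases hcase : n = m - 1
    · rw [if_pos hcase]
      have h1 : n + 1 = m := by omega
      have h2 : (n + 1) * p / m = p := by rw [h1, Nat.mul_div_cancel_left p hm0]
      have h3 : (p * (n + 1) - 1) / m = p - 1 := by rw [h1]; exact hE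
      rw [h2, h3, hfn]
      have : ((p - 1 : ℕ) : ℤ) = (p : ℤ) - 1 := by omega
      rw [this]; ring
    · rw [if_neg hcase]
      have h1 : 1 ≤ n + 1 := by omega
      have h2 : n + 1 < m := by omega
      rw [hD (n + 1) h1 h2, mul_comm p (n + 1), hfn]
      ring
  rw [Finset.sum_congr rfl hterm, Finset.sum_sub_distrib]
  have hmem : m - 1 ∈ (Finset.range m).filter (fun n => n / b ^ ℓ = n % b) := by
    simp only [Finset.mem_filter, Finset.mem_range]
    refine ⟨by omega, ?_⟩
    have e1 : b ^ ℓ * (b - 1) + b ^ ℓ = b ^ ℓ * b := by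
      rw [← Nat.mul_succ]; congr 1; omega
    have e3 : m - 1 = b ^ ℓ * (b - 1) + (b ^ ℓ - 1) := by omega
    have hdiv : (m - 1) / b ^ ℓ = b - 1 := by
      rw [e3, Nat.mul_add_div hX, Nat.div_eq_of_lt (by omega), add_zero]
    have e1' : b * (b ^ ℓ - 1) + b = b * b ^ ℓ := by
      rw [← Nat.mul_succ]; congr 1; omega
    have e3' : m - 1 = b * (b ^ ℓ - 1) + (b - 1) := by omega
    have hmod : (m - 1) % b = b - 1 := by
      rw [e3', Nat.mul_add_mod, Nat.mod_eq_of_lt (by omega)]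
    rw [hdiv, hmod]
  rw [Finset.sum_ite_eq', if_pos hmem]
  ring
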